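/- arXiv:0901.0319 — 5 statements merged into one kernel-verified Lean document; each statement's English description precedes it below -/
import Mathlib

section
/- Let A be a Lie-Rinehart algebra over R and ∇ : L × A → A a connection on A. Then: (i) the basic curvature R^bas_∇(α,β)(X) is alternating in (α,β) and R-linear in each of the arguments α, β and X (it is a tensor); (ii) the anchor intertwines the two basic connections: ρ(∇^bas_α β) = ∇^bas_α(ρ(β)) for all α,β ∈ A; (iii) the curvature of the basic A-connection ∇^bas on A satisfies R_{∇^bas}(α,β)(γ) = −R^bas_∇(α,β)(ρ(γ)) for all α,β,γ ∈ A; (iv) the curvature of the basic A-connection ∇^bas on L satisfies R_{∇^bas}(α,β)(X) = −ρ(R^bas_∇(α,β)(X)) for all α,β ∈ A and X ∈ L. -/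
/-! Basic algebraic model: Lie-Rinehart algebras over a commutative `ℝ`-algebra `R`,
`A`-connections, and raw Koszul/wedge operations on forms. -/

section LieRinehartBasics

variable (R : Type) [CommRing R] [Algebra ℝ R]
variable (A : Type) [AddCommGroup A] [Module R A]

/-- A Lie-Rinehart algebra over the commutative `ℝ`-algebra `R`: an `R`-module `A` with an
`ℝ`-bilinear Lie bracket and an `R`-linear anchor `ρ : A → Der_ℝ(R)` preserving brackets
and satisfying the Leibniz rule. -/
structure LieRinehart where
  bracket : A → A → A
  anchor : A →ₗ[R] Derivation ℝ R R
  bracket_add_left : ∀ x y z : A, bracket (x + y) z = bracket x z + bracket y z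
  bracket_add_right : ∀ x y z : A, bracket x (y + z) = bracket x y + bracket x z
  bracket_skew : ∀ x y : A, bracket x y = - bracket y x
  bracket_jacobi : ∀ x y z : A,
    bracket x (bracket y z) = bracket (bracket x y) z + bracket y (bracket x z)
  bracket_leibniz : ∀ (f : R) (x y : A),
    bracket x (f • y) = f • bracket x y + (anchor x f) • y
  anchor_bracket : ∀ (x y : A) (f : R),
    anchor (bracket x y) f = anchor x (anchor y f) - anchor y (anchor x f)

variable {R A}

/-- An `A`-connection on the `R`-module `E`. -/
structure AConn (LR : LieRinehart R A) (E : Type) [AddCommGroup E] [Module R E] where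
  conn : A → E → E
  conn_add_left : ∀ x y s, conn (x + y) s = conn x s + conn y s
  conn_smul_left : ∀ (f : R) x s, conn (f • x) s = f • conn x s
  conn_add_right : ∀ x s t, conn x (s + t) = conn x s + conn x t
  conn_leibniz : ∀ x (f : R) s, conn x (f • s) = f • conn x s + (LR.anchor x f) • s

/-- The curvature of an `A`-connection. -/
def AConn.curv {LR : LieRinehart R A} {E : Type} [AddCommGroup E] [Module R E]
    (C : AConn LR E) (x y : A) (s : E) : E :=
  C.conn x (C.conn y s) - C.conn y (C.conn x s) - C.conn (LR.bracket x y) s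

/-- The raw Koszul operator sending a `p`-form (an arbitrary function on `p`-tuples)
to a `(p+1)`-form, for an operation `nab` ("connection") and a bracket `br`:
`(dω)(α₀,…,α_p) = Σᵢ (-1)ⁱ nab_{αᵢ}(ω(…,α̂ᵢ,…)) + Σ_{i<j} (-1)^{i+j} ω(br(αᵢ,αⱼ),…,α̂ᵢ,…,α̂ⱼ,…)`. -/
def koszulRaw {E : Type} [AddCommGroup E] (nab : A → E → E) (br : A → A → A)
    (p : ℕ) (ω : (Fin p → A) → E) : (Fin (p + 1) → A) → E := fun α =>
  (∑ i : Fin (p + 1), (-1 : ℤ) ^ (i : ℕ) • nab (α i) (ω (fun k => α (i.succAbove k))))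
  + ∑ i : Fin (p + 1), ∑ j : Fin (p + 1),
      if (i : ℕ) < (j : ℕ) then
        (-1 : ℤ) ^ ((i : ℕ) + (j : ℕ)) • ω (fun k : Fin p =>
          if (k : ℕ) = 0 then br (α i) (α j)
          else α ⟨if (k : ℕ) - 1 < (i : ℕ) then (k : ℕ) - 1
                  else if (k : ℕ) < (j : ℕ) then (k : ℕ) else (k : ℕ) + 1,
                by have hk := k.isLt; split_ifs <;> omega⟩)
      else 0

/-- `(p,q)`-shuffles: permutations of `Fin (p+q)` which are strictly increasing on the
first `p` and on the last `q` positions. -/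
def IsShuffle (p q : ℕ) (σ : Equiv.Perm (Fin (p + q))) : Prop :=
  (∀ i j : Fin (p + q), i < j → (j : ℕ) < p → σ i < σ j) ∧
  (∀ i j : Fin (p + q), i < j → p ≤ (i : ℕ) → σ i < σ j)

open scoped Classical in
/-- The raw shuffle wedge product of a scalar `p`-form with an `E`-valued `q`-form. -/
noncomputable def wedgeRaw {E : Type} [AddCommGroup E] [Module R E]
    (p q : ℕ) (ω : (Fin p → A) → R) (η : (Fin q → A) → E) : (Fin (p + q) → A) → E :=
  fun α => ∑ σ : Equiv.Perm (Fin (p + q)),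
    if IsShuffle p q σ then
      (Equiv.Perm.sign σ : ℤ) •
        (ω (fun i => α (σ (Fin.castAdd q i))) • η (fun j => α (σ (Fin.natAdd p j))))
    else 0

end LieRinehartBasics

section BasicConnections

variable {R : Type} [CommRing R] [Algebra ℝ R]
variable {A : Type} [AddCommGroup A] [Module R A]

variable (R A) in
/-- A connection `∇ : L × A → A` on `A`, where `L = Der_ℝ(R)` plays the role of vector
fields. -/
structure LConn where
  conn : Derivation ℝ R R → A → A
  conn_add_left : ∀ X Y a, conn (X + Y) a = conn X a + conn Y a
  conn_smul_left : ∀ (f : R) X a, conn (f • X) a = f • conn X a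
  conn_add_right : ∀ X a b, conn X (a + b) = conn X a + conn X b
  conn_leibniz : ∀ X (f : R) a, conn X (f • a) = f • conn X a + (X f) • a

/-- The basic `A`-connection on `A` induced by `∇`: `∇ᵇᵃˢ_a b = ∇_{ρ(b)} a + [a, b]`. -/
def basA (LR : LieRinehart R A) (N : LConn R A) (a b : A) : A :=
  N.conn (LR.anchor b) a + LR.bracket a b

/-- The basic `A`-connection on `L = Der_ℝ(R)` induced by `∇`:
`∇ᵇᵃˢ_a X = ρ(∇_X a) + [ρ(a), X]`. -/
def basL (LR : LieRinehart R A) (N : LConn R A) (a : A) (X : Derivation ℝ R R) :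
    Derivation ℝ R R :=
  LR.anchor (N.conn X a) + ⁅LR.anchor a, X⁆

/-- The basic curvature of `∇`:
`Rᵇᵃˢ(a,b)(X) = ∇_X [a,b] - [∇_X a, b] - [a, ∇_X b] - ∇_{∇ᵇᵃˢ_b X} a + ∇_{∇ᵇᵃˢ_a X} b`. -/
def basCurv (LR : LieRinehart R A) (N : LConn R A) (a b : A) (X : Derivation ℝ R R) : A :=
  N.conn X (LR.bracket a b) - LR.bracket (N.conn X a) b - LR.bracket a (N.conn X b)
    - N.conn (basL LR N b X) a + N.conn (basL LR N a X) b

end BasicConnections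

section Helpers

variable {R : Type} [CommRing R] [Algebra ℝ R]
variable {A : Type} [AddCommGroup A] [Module R A]
variable (LR : LieRinehart R A) (N : LConn R A)

lemma conn_zero_right (X : Derivation ℝ R R) : N.conn X (0 : A) = 0 := by
  have h := N.conn_leibniz X 0 (0 : A); simpa using h

lemma conn_neg_right (X : Derivation ℝ R R) (a : A) : N.conn X (-a) = - N.conn X a := by
  have h := N.conn_add_right X a (-a)
  rw [add_neg_cancel, conn_zero_right] at h
  exact eq_neg_of_add_eq_zero_right h.symm

lemma conn_sub_right (X : Derivation ℝ R R) (a b : A) :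
    N.conn X (a - b) = N.conn X a - N.conn X b := by
  rw [sub_eq_add_neg, N.conn_add_right, conn_neg_right, sub_eq_add_neg]

lemma br_smul_left (f : R) (a b : A) :
    LR.bracket (f • a) b = f • LR.bracket a b - LR.anchor b f • a := by
  rw [LR.bracket_skew, LR.bracket_leibniz, LR.bracket_skew b a]
  module

lemma anchor_br (a b : A) :
    LR.anchor (LR.bracket a b) = ⁅LR.anchor a, LR.anchor b⁆ := by
  ext f
  rw [Derivation.commutator_apply]
  exact LR.anchor_bracket a b f

lemma comm_smul_left (f : R) (Y X : Derivation ℝ R R) :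
    ⁅f • Y, X⁆ = f • ⁅Y, X⁆ - X f • Y := by
  ext g
  simp [Derivation.commutator_apply, Derivation.leibniz, smul_eq_mul]
  ring

lemma comm_smul_right (f : R) (Y X : Derivation ℝ R R) :
    ⁅Y, f • X⁆ = f • ⁅Y, X⁆ + Y f • X := by
  ext g
  simp [Derivation.commutator_apply, Derivation.leibniz, smul_eq_mul]

lemma basL_apply (a : A) (X : Derivation ℝ R R) (f : R) :
    basL LR N a X f
      = LR.anchor (N.conn X a) f + (LR.anchor a (X f) - X (LR.anchor a f)) := by
  simp [basL, Derivation.commutator_apply]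

lemma basL_smul_a (f : R) (a : A) (X : Derivation ℝ R R) :
    basL LR N (f • a) X = f • basL LR N a X := by
  simp only [basL, N.conn_leibniz, map_add, map_smul, comm_smul_left, smul_add]
  module

lemma basL_smul_X (f : R) (a : A) (X : Derivation ℝ R R) :
    basL LR N a (f • X) = f • basL LR N a X + LR.anchor a f • X := by
  simp only [basL, N.conn_smul_left, map_smul, comm_smul_right, smul_add]
  module

lemma basL_add_a (a a' : A) (X : Derivation ℝ R R) :
    basL LR N (a + a') X = basL LR N a X + basL LR N a' X := by
  simp only [basL, N.conn_add_right, map_add, add_lie]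
  abel

lemma basL_add_X (a : A) (X Y : Derivation ℝ R R) :
    basL LR N a (X + Y) = basL LR N a X + basL LR N a Y := by
  simp only [basL, N.conn_add_left, map_add, lie_add]
  abel

lemma bc_skew (a b : A) (X : Derivation ℝ R R) :
    basCurv LR N a b X = - basCurv LR N b a X := by
  simp only [basCurv]
  rw [LR.bracket_skew b a, conn_neg_right,
      LR.bracket_skew (N.conn X b) a, LR.bracket_skew b (N.conn X a)]
  abel

lemma bc_add_a (a a' b : A) (X : Derivation ℝ R R) :
    basCurv LR N (a + a') b X = basCurv LR N a b X + basCurv LR N a' b X := by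
  simp only [basCurv, LR.bracket_add_left, LR.bracket_add_right, N.conn_add_right,
    basL_add_a, N.conn_add_left]
  abel

lemma bc_smul_a (f : R) (a b : A) (X : Derivation ℝ R R) :
    basCurv LR N (f • a) b X = f • basCurv LR N a b X := by
  simp only [basCurv, N.conn_leibniz, br_smul_left, conn_sub_right,
    LR.bracket_add_left, basL_smul_a, N.conn_smul_left, basL_apply]
  module

lemma bc_add_b (a b b' : A) (X : Derivation ℝ R R) :
    basCurv LR N a (b + b') X = basCurv LR N a b X + basCurv LR N a b' X := by
  rw [bc_skew LR N a (b + b') X, bc_add_a, bc_skew LR N b a X, bc_skew LR N b' a X]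
  abel

lemma bc_smul_b (f : R) (a b : A) (X : Derivation ℝ R R) :
    basCurv LR N a (f • b) X = f • basCurv LR N a b X := by
  rw [bc_skew LR N a (f • b) X, bc_smul_a, bc_skew LR N b a X]
  module

lemma bc_add_X (a b : A) (X Y : Derivation ℝ R R) :
    basCurv LR N a b (X + Y) = basCurv LR N a b X + basCurv LR N a b Y := by
  simp only [basCurv, N.conn_add_left, basL_add_X, LR.bracket_add_left,
    LR.bracket_add_right]
  abel

lemma bc_smul_X (f : R) (a b : A) (X : Derivation ℝ R R) :
    basCurv LR N a b (f • X) = f • basCurv LR N a b X := by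
  simp only [basCurv, N.conn_smul_left, basL_smul_X, N.conn_add_left,
    br_smul_left, LR.bracket_leibniz]
  module

lemma anchor_basA (a b : A) :
    LR.anchor (basA LR N a b) = basL LR N a (LR.anchor b) := by
  simp only [basA, basL, map_add, anchor_br]

lemma bc_part3 (a b c : A) :
    basA LR N a (basA LR N b c) - basA LR N b (basA LR N a c)
        - basA LR N (LR.bracket a b) c
      = - basCurv LR N a b (LR.anchor c) := by
  simp only [basA, basCurv, basL, map_add, anchor_br, LR.bracket_add_right]
  rw [LR.bracket_jacobi a b c, LR.bracket_skew (N.conn (LR.anchor c) a) b]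
  abel

lemma bc_part4 (a b : A) (X : Derivation ℝ R R) :
    basL LR N a (basL LR N b X) - basL LR N b (basL LR N a X)
        - basL LR N (LR.bracket a b) X
      = - LR.anchor (basCurv LR N a b X) := by
  simp only [basL, basCurv, map_add, map_sub, anchor_br, lie_add]
  rw [lie_lie, ← lie_skew (LR.anchor b) (LR.anchor (N.conn X a))]
  abel

end Helpers

/-- Properties of the basic connections and basic curvature of a
connection `∇` on a Lie-Rinehart algebra `A`: (i) the basic curvature is a tensor
(alternating in `(a,b)` and `R`-linear in each argument); (ii) the anchor intertwines the
two basic connections; (iii) the curvature of `∇ᵇᵃˢ` on `A` is `-Rᵇᵃˢ ∘ ρ` ;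
(iv) the curvature of `∇ᵇᵃˢ` on `L` is `-ρ ∘ Rᵇᵃˢ`. -/
theorem statement1
    {R : Type} [CommRing R] [Algebra ℝ R]
    {A : Type} [AddCommGroup A] [Module R A]
    (LR : LieRinehart R A) (N : LConn R A) :
    -- (i) the basic curvature is an alternating tensor
    (∀ (a b : A) (X : Derivation ℝ R R), basCurv LR N a b X = - basCurv LR N b a X)
    ∧ (∀ (a a' b : A) (X : Derivation ℝ R R),
        basCurv LR N (a + a') b X = basCurv LR N a b X + basCurv LR N a' b X)
    ∧ (∀ (f : R) (a b : A) (X : Derivation ℝ R R),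
        basCurv LR N (f • a) b X = f • basCurv LR N a b X)
    ∧ (∀ (a b b' : A) (X : Derivation ℝ R R),
        basCurv LR N a (b + b') X = basCurv LR N a b X + basCurv LR N a b' X)
    ∧ (∀ (f : R) (a b : A) (X : Derivation ℝ R R),
        basCurv LR N a (f • b) X = f • basCurv LR N a b X)
    ∧ (∀ (a b : A) (X Y : Derivation ℝ R R),
        basCurv LR N a b (X + Y) = basCurv LR N a b X + basCurv LR N a b Y)
    ∧ (∀ (f : R) (a b : A) (X : Derivation ℝ R R),
        basCurv LR N a b (f • X) = f • basCurv LR N a b X)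
    -- (ii) the anchor intertwines the two basic connections
    ∧ (∀ a b : A, LR.anchor (basA LR N a b) = basL LR N a (LR.anchor b))
    -- (iii) curvature of the basic connection on `A`
    ∧ (∀ a b c : A,
        basA LR N a (basA LR N b c) - basA LR N b (basA LR N a c)
            - basA LR N (LR.bracket a b) c
          = - basCurv LR N a b (LR.anchor c))
    -- (iv) curvature of the basic connection on `L`
    ∧ (∀ (a b : A) (X : Derivation ℝ R R),
        basL LR N a (basL LR N b X) - basL LR N b (basL LR N a X)
            - basL LR N (LR.bracket a b) X
          = - LR.anchor (basCurv LR N a b X)) := by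
  
  exact ⟨bc_skew LR N, bc_add_a LR N, bc_smul_a LR N, bc_add_b LR N, bc_smul_b LR N,
    bc_add_X LR N, bc_smul_X LR N, anchor_basA LR N, bc_part3 LR N, bc_part4 LR N⟩
end

section
/- Let A be a Lie-Rinehart algebra over R and ∇ : L × A → A a connection on A. Regard the basic curvature R^bas_∇ as an element of Ω²(A; Hom_R(L,A)), where Hom_R(L,A) carries the A-connection (∇^bas_α T)(X) := ∇^bas_α(T(X)) − T(∇^bas_α X). Then R^bas_∇ is closed with respect to this connection: d_{∇^bas}(R^bas_∇) = 0 in Ω³(A; Hom_R(L,A)). -/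
/-- The `A`-connection induced by the basic connections on `Hom_R(L, A)`
(realized on plain functions `L → A`): `(∇ᵇᵃˢ_a T)(X) = ∇ᵇᵃˢ_a (T X) - T (∇ᵇᵃˢ_a X)`. -/
def homBasConn {R : Type} [CommRing R] [Algebra ℝ R]
    {A : Type} [AddCommGroup A] [Module R A]
    (LR : LieRinehart R A) (N : LConn R A) (a : A)
    (T : Derivation ℝ R R → A) : Derivation ℝ R R → A :=
  fun X => basA LR N a (T X) - T (basL LR N a X)

section Aux
variable {R : Type} [CommRing R] [Algebra ℝ R]
variable {A : Type} [AddCommGroup A] [Module R A]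

lemma br_zero_right (LR : LieRinehart R A) (x : A) : LR.bracket x 0 = 0 := by
  have h := LR.bracket_add_right x 0 0
  rw [add_zero] at h
  exact (right_eq_add.mp h)

lemma br_zero_left (LR : LieRinehart R A) (x : A) : LR.bracket 0 x = 0 := by
  have h := LR.bracket_add_left 0 0 x
  rw [add_zero] at h
  exact (right_eq_add.mp h)

lemma br_neg_right (LR : LieRinehart R A) (x y : A) :
    LR.bracket x (-y) = -LR.bracket x y := by
  apply eq_neg_of_add_eq_zero_left
  rw [← LR.bracket_add_right, neg_add_cancel, br_zero_right]

lemma br_neg_left (LR : LieRinehart R A) (x y : A) :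
    LR.bracket (-x) y = -LR.bracket x y := by
  apply eq_neg_of_add_eq_zero_left
  rw [← LR.bracket_add_left, neg_add_cancel, br_zero_left]

lemma br_sub_right (LR : LieRinehart R A) (x y z : A) :
    LR.bracket x (y - z) = LR.bracket x y - LR.bracket x z := by
  rw [sub_eq_add_neg, LR.bracket_add_right, br_neg_right, ← sub_eq_add_neg]

lemma br_sub_left (LR : LieRinehart R A) (x y z : A) :
    LR.bracket (x - y) z = LR.bracket x z - LR.bracket y z := by
  rw [sub_eq_add_neg, LR.bracket_add_left, br_neg_left, ← sub_eq_add_neg]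

lemma cn_zero_right (N : LConn R A) (X : Derivation ℝ R R) : N.conn X 0 = 0 := by
  have h := N.conn_add_right X 0 0
  rw [add_zero] at h
  exact (right_eq_add.mp h)

lemma cn_zero_left (N : LConn R A) (a : A) : N.conn 0 a = 0 := by
  have h := N.conn_add_left 0 0 a
  rw [add_zero] at h
  exact (right_eq_add.mp h)

lemma cn_neg_right (N : LConn R A) (X : Derivation ℝ R R) (a : A) :
    N.conn X (-a) = -N.conn X a := by
  apply eq_neg_of_add_eq_zero_left
  rw [← N.conn_add_right, neg_add_cancel, cn_zero_right]

lemma cn_neg_left (N : LConn R A) (X : Derivation ℝ R R) (a : A) :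
    N.conn (-X) a = -N.conn X a := by
  apply eq_neg_of_add_eq_zero_left
  rw [← N.conn_add_left, neg_add_cancel, cn_zero_left]

lemma cn_sub_right (N : LConn R A) (X : Derivation ℝ R R) (a b : A) :
    N.conn X (a - b) = N.conn X a - N.conn X b := by
  rw [sub_eq_add_neg, N.conn_add_right, cn_neg_right, ← sub_eq_add_neg]

lemma cn_sub_left (N : LConn R A) (X Y : Derivation ℝ R R) (a : A) :
    N.conn (X - Y) a = N.conn X a - N.conn Y a := by
  rw [sub_eq_add_neg, N.conn_add_left, cn_neg_left, ← sub_eq_add_neg]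

lemma anch_lie (LR : LieRinehart R A) (x y : A) :
    LR.anchor (LR.bracket x y) = ⁅LR.anchor x, LR.anchor y⁆ := by
  ext f
  rw [Derivation.commutator_apply, LR.anchor_bracket]

end Aux


set_option maxRecDepth 8000
set_option maxHeartbeats 1000000 in
/-- The basic curvature `Rᵇᵃˢ_∇ ∈ Ω²(A; Hom_R(L,A))` is closed with
respect to the connection induced by the basic connections:
`d_{∇ᵇᵃˢ}(Rᵇᵃˢ_∇) = 0` in `Ω³(A; Hom_R(L,A))` (stated by evaluating the `Hom`-valued
`3`-form on any triple of elements of `A` and any derivation `X`). -/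
theorem statement2
    {R : Type} [CommRing R] [Algebra ℝ R]
    {A : Type} [AddCommGroup A] [Module R A]
    (LR : LieRinehart R A) (N : LConn R A) :
    ∀ (α : Fin 3 → A) (X : Derivation ℝ R R),
      koszulRaw (homBasConn LR N) LR.bracket 2
        (fun v : Fin 2 → A => fun Y => basCurv LR N (v 0) (v 1) Y) α X = 0 := by
  intro α X
  simp only [koszulRaw, Pi.add_apply, Finset.sum_apply, Pi.smul_apply, ite_apply, Pi.zero_apply,
    Fin.sum_univ_succ, Fin.sum_univ_zero, Fin.isValue]
  norm_num [Fin.succAbove, Fin.lt_def, Fin.ext_iff]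
  have h2 : (⟨2, by omega⟩ : Fin 3) = 2 := rfl
  rw [h2]
  set a := α 0 with ha
  set b := α 1 with hb
  set c := α 2 with hc
  simp only [homBasConn, basCurv, basA, basL,
    LR.bracket_add_left, LR.bracket_add_right, br_sub_left, br_sub_right, br_neg_left,
    br_neg_right,
    N.conn_add_left, N.conn_add_right, cn_sub_left, cn_sub_right, cn_neg_left, cn_neg_right,
    map_add, map_sub, map_neg,
    lie_add, add_lie, lie_sub, sub_lie, lie_neg, neg_lie,
    anch_lie, lie_lie]
  -- skew rewrites (A-level)
  rw [LR.bracket_skew (N.conn ⁅LR.anchor a, X⁆ b) c,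
      LR.bracket_skew (N.conn ⁅LR.anchor b, X⁆ a) c,
      LR.bracket_skew (N.conn ⁅LR.anchor c, X⁆ a) b,
      LR.bracket_skew (N.conn (LR.anchor (N.conn X a)) b) c,
      LR.bracket_skew (N.conn (LR.anchor (N.conn X b)) a) c,
      LR.bracket_skew (N.conn (LR.anchor (N.conn X c)) a) b,
      LR.bracket_skew (N.conn X (LR.bracket a b)) c,
      LR.bracket_skew (N.conn X (LR.bracket a c)) b,
      LR.bracket_skew (N.conn X (LR.bracket b c)) a,
      LR.bracket_skew (N.conn X a) b,
      LR.bracket_skew (N.conn X a) c,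
      LR.bracket_skew (N.conn X b) c]
  -- skew rewrites (L-level)
  rw [show (⁅LR.anchor (N.conn X a), LR.anchor b⁆ : Derivation ℝ R R)
        = -⁅LR.anchor b, LR.anchor (N.conn X a)⁆ from (lie_skew _ _).symm,
      show (⁅LR.anchor (N.conn X a), LR.anchor c⁆ : Derivation ℝ R R)
        = -⁅LR.anchor c, LR.anchor (N.conn X a)⁆ from (lie_skew _ _).symm,
      show (⁅LR.anchor (N.conn X b), LR.anchor c⁆ : Derivation ℝ R R)
        = -⁅LR.anchor c, LR.anchor (N.conn X b)⁆ from (lie_skew _ _).symm]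
  -- double-bracket identity
  have hD : LR.bracket (LR.bracket a b) c
      = LR.bracket (LR.bracket a c) b - LR.bracket (LR.bracket b c) a := by
    have j := LR.bracket_jacobi a b c
    rw [LR.bracket_skew (LR.bracket a c) b, LR.bracket_skew (LR.bracket b c) a, j]
    abel
  rw [hD]
  simp only [br_neg_right, br_neg_left, cn_neg_left, cn_neg_right, cn_sub_right, cn_sub_left,
    neg_neg]
  -- Jacobi rewrites
  rw [LR.bracket_jacobi a b (N.conn X c),
      LR.bracket_jacobi a c (N.conn X b),
      LR.bracket_jacobi b c (N.conn X a)]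
  abel
end

section
/- Let A be a Lie-Rinehart algebra over R, let E and F be R-modules, ∂ : E → F an R-linear map, ∇ A-connections on E and on F with ∇_α∘∂ = ∂∘∇_α for all α ∈ A, and K : A × A → Hom_R(F,E) an alternating R-bilinear map such that (a) R_{∇^E}(α,β) = K(α,β)∘∂ and R_{∇^F}(α,β) = ∂∘K(α,β) for all α,β ∈ A, and (b) ∇_α(K(β,γ)) + ∇_β(K(γ,α)) + ∇_γ(K(α,β)) = K([α,β],γ) + K([β,γ],α) + K([γ,α],β) for all α,β,γ ∈ A, where ∇_α(T) := ∇^E_α∘T − T∘∇^F_α on Hom_R(F,E). Then: (i) g_∂ := Hom_R(F,E) with the bracket [S,T]_∂ := S∘∂∘T − T∘∂∘S is a Lie algebra over R; (ii) Ã := Hom_R(F,E) ⊕ A, with anchor ρ̃(T,α) := ρ(α) and bracket [(S,α),(T,β)] := ([S,T]_∂ + ∇_α(T) − ∇_β(S) + K(α,β), [α,β]), is a Lie-Rinehart algebra over R (in particular this bracket satisfies the Jacobi identity and the Leibniz rule with respect to ρ̃); (iii) the inclusion T ↦ (T,0) and the projection (T,α) ↦ α are morphisms, exhibiting Ã as an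 extension of A by the bundle of Lie algebras g_∂. -/
section Extension

variable {R : Type} [CommRing R] [Algebra ℝ R]
variable {A : Type} [AddCommGroup A] [Module R A]
variable {E F : Type} [AddCommGroup E] [Module R E] [AddCommGroup F] [Module R F]

/-- The induced `A`-connection on `Hom_R(F, E)`:
`(∇_a T)(t) = ∇ᴱ_a (T t) - T (∇ᶠ_a t)`. -/
def connHom {LR : LieRinehart R A} (CE : AConn LR E) (CF : AConn LR F)
    (a : A) (T : F →ₗ[R] E) : F →ₗ[R] E where
  toFun t := CE.conn a (T t) - T (CF.conn a t)
  map_add' x y := by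
    simp only [map_add, CE.conn_add_right, CF.conn_add_right]; abel
  map_smul' f t := by
    simp only [map_smul, RingHom.id_apply, CE.conn_leibniz, CF.conn_leibniz, map_add,
      smul_sub]
    abel

/-- The fibrewise Lie bracket `[S, T]_∂ = S∂T - T∂S` on `g_∂ = Hom_R(F, E)`. -/
def brDel (del : E →ₗ[R] F) (S T : F →ₗ[R] E) : F →ₗ[R] E :=
  S.comp (del.comp T) - T.comp (del.comp S)

section Helpers
set_option linter.unusedSectionVars false
variable {LR : LieRinehart R A}

lemma conn_neg' {E' : Type} [AddCommGroup E'] [Module R E'] (C : AConn LR E')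
    (x : A) (s : E') : C.conn x (-s) = - C.conn x s := by
  have h := C.conn_leibniz x (-1 : R) s
  simpa [Derivation.map_one_eq_zero] using h

lemma conn_sub' {E' : Type} [AddCommGroup E'] [Module R E'] (C : AConn LR E')
    (x : A) (s t : E') : C.conn x (s - t) = C.conn x s - C.conn x t := by
  rw [sub_eq_add_neg, C.conn_add_right, conn_neg', sub_eq_add_neg]

@[simp] lemma connHom_apply (CE : AConn LR E) (CF : AConn LR F) (a : A) (T : F →ₗ[R] E)
    (t : F) : connHom CE CF a T t = CE.conn a (T t) - T (CF.conn a t) := rfl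

@[simp] lemma brDel_apply (del : E →ₗ[R] F) (S T : F →ₗ[R] E) (t : F) :
    brDel del S T t = S (del (T t)) - T (del (S t)) := rfl

lemma brDel_skew (del : E →ₗ[R] F) (S T : F →ₗ[R] E) :
    brDel del S T = - brDel del T S := by
  simp [brDel, neg_sub]

lemma brDel_add_left (del : E →ₗ[R] F) (S S' T : F →ₗ[R] E) :
    brDel del (S + S') T = brDel del S T + brDel del S' T := by
  ext t; simp; abel

lemma brDel_add_right (del : E →ₗ[R] F) (S T T' : F →ₗ[R] E) :
    brDel del S (T + T') = brDel del S T + brDel del S T' := by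
  ext t; simp; abel

lemma brDel_smul_left (del : E →ₗ[R] F) (f : R) (S T : F →ₗ[R] E) :
    brDel del (f • S) T = f • brDel del S T := by
  ext t; simp [smul_sub]

lemma brDel_smul_right (del : E →ₗ[R] F) (f : R) (S T : F →ₗ[R] E) :
    brDel del S (f • T) = f • brDel del S T := by
  ext t; simp [smul_sub]

lemma brDel_neg_left (del : E →ₗ[R] F) (S T : F →ₗ[R] E) :
    brDel del (-S) T = - brDel del S T := by
  ext t; simp; abel

lemma brDel_neg_right (del : E →ₗ[R] F) (S T : F →ₗ[R] E) :
    brDel del S (-T) = - brDel del S T := by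
  ext t; simp; abel

lemma brDel_sub_left (del : E →ₗ[R] F) (S S' T : F →ₗ[R] E) :
    brDel del (S - S') T = brDel del S T - brDel del S' T := by
  ext t; simp; abel

lemma brDel_sub_right (del : E →ₗ[R] F) (S T T' : F →ₗ[R] E) :
    brDel del S (T - T') = brDel del S T - brDel del S T' := by
  ext t; simp; abel

lemma brDel_jacobi (del : E →ₗ[R] F) (S T U : F →ₗ[R] E) :
    brDel del S (brDel del T U)
      = brDel del (brDel del S T) U + brDel del T (brDel del S U) := by
  ext t; simp [map_sub]; abel


lemma connHom_add_left (CE : AConn LR E) (CF : AConn LR F) (a a' : A) (T : F →ₗ[R] E) :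
    connHom CE CF (a + a') T = connHom CE CF a T + connHom CE CF a' T := by
  ext t; simp [CE.conn_add_left, CF.conn_add_left, map_add]; abel

lemma connHom_smul_left (CE : AConn LR E) (CF : AConn LR F) (f : R) (a : A) (T : F →ₗ[R] E) :
    connHom CE CF (f • a) T = f • connHom CE CF a T := by
  ext t; simp [CE.conn_smul_left, CF.conn_smul_left, smul_sub]

lemma connHom_add_right (CE : AConn LR E) (CF : AConn LR F) (a : A) (T T' : F →ₗ[R] E) :
    connHom CE CF a (T + T') = connHom CE CF a T + connHom CE CF a T' := by
  ext t; simp [CE.conn_add_right]; abel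

lemma connHom_neg_right (CE : AConn LR E) (CF : AConn LR F) (a : A) (T : F →ₗ[R] E) :
    connHom CE CF a (-T) = - connHom CE CF a T := by
  ext t; simp [conn_neg']; abel

lemma connHom_sub_right (CE : AConn LR E) (CF : AConn LR F) (a : A) (T T' : F →ₗ[R] E) :
    connHom CE CF a (T - T') = connHom CE CF a T - connHom CE CF a T' := by
  ext t; simp [conn_sub']; abel

lemma connHom_leibniz (CE : AConn LR E) (CF : AConn LR F) (a : A) (f : R) (T : F →ₗ[R] E) :
    connHom CE CF a (f • T) = f • connHom CE CF a T + (LR.anchor a f) • T := by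
  ext t; simp [CE.conn_leibniz, smul_sub]; abel

lemma connHom_brDel (CE : AConn LR E) (CF : AConn LR F)
    (del : E →ₗ[R] F)
    (hcompat : ∀ (a : A) (s : E), CF.conn a (del s) = del (CE.conn a s))
    (a : A) (S T : F →ₗ[R] E) :
    connHom CE CF a (brDel del S T)
      = brDel del (connHom CE CF a S) T + brDel del S (connHom CE CF a T) := by
  ext t
  simp [conn_sub', map_sub, hcompat]
  abel

lemma connHom_comm (CE : AConn LR E) (CF : AConn LR F)
    (del : E →ₗ[R] F) (K : A → A → (F →ₗ[R] E))
    (hRE : ∀ (a b : A) (s : E), CE.curv a b s = K a b (del s))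
    (hRF : ∀ (a b : A) (t : F), CF.curv a b t = del (K a b t))
    (a b : A) (T : F →ₗ[R] E) :
    connHom CE CF a (connHom CE CF b T)
      = connHom CE CF b (connHom CE CF a T)
        + connHom CE CF (LR.bracket a b) T + brDel del (K a b) T := by
  ext t
  have h1 := hRE a b (T t)
  have h2 := congrArg T (hRF a b t)
  unfold AConn.curv at h1 h2
  rw [sub_sub, sub_eq_iff_eq_add] at h1
  rw [map_sub, map_sub, sub_sub, sub_eq_iff_eq_add] at h2
  simp only [connHom_apply, brDel_apply, LinearMap.add_apply, conn_sub', map_sub]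
  rw [h1, h2]
  abel

lemma K_zero_right (K : A → A → (F →ₗ[R] E))
    (hK_smul_right : ∀ (f : R) a b, K a (f • b) = f • K a b) (x : A) : K x 0 = 0 := by
  have h := hK_smul_right 0 x 0
  simpa using h

lemma K_neg_right (K : A → A → (F →ₗ[R] E))
    (hK_add_right : ∀ a b b', K a (b + b') = K a b + K a b')
    (hK_smul_right : ∀ (f : R) a b, K a (f • b) = f • K a b) (x y : A) :
    K x (-y) = - K x y := by
  have h : K x y + K x (-y) = 0 := by
    rw [← hK_add_right]; simp [K_zero_right K hK_smul_right]
  exact eq_neg_of_add_eq_zero_right h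

lemma jacobi_fst (CE : AConn LR E) (CF : AConn LR F) (del : E →ₗ[R] F)
    (hcompat : ∀ (a : A) (s : E), CF.conn a (del s) = del (CE.conn a s))
    (K : A → A → (F →ₗ[R] E))
    (hK_skew : ∀ a b, K a b = - K b a)
    (hK_add_right : ∀ a b b', K a (b + b') = K a b + K a b')
    (hK_smul_right : ∀ (f : R) a b, K a (f • b) = f • K a b)
    (hRE : ∀ (a b : A) (s : E), CE.curv a b s = K a b (del s))
    (hRF : ∀ (a b : A) (t : F), CF.curv a b t = del (K a b t))
    (hBianchi : ∀ a b c : A,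
      connHom CE CF a (K b c) + connHom CE CF b (K c a) + connHom CE CF c (K a b)
        = K (LR.bracket a b) c + K (LR.bracket b c) a + K (LR.bracket c a) b)
    (S T U : F →ₗ[R] E) (a b c : A) :
    brDel del S (brDel del T U + connHom CE CF b U - connHom CE CF c T + K b c)
      + connHom CE CF a (brDel del T U + connHom CE CF b U - connHom CE CF c T + K b c)
      - connHom CE CF (LR.bracket b c) S + K a (LR.bracket b c)
    = (brDel del (brDel del S T + connHom CE CF a T - connHom CE CF b S + K a b) U
        + connHom CE CF (LR.bracket a b) U
        - connHom CE CF c (brDel del S T + connHom CE CF a T - connHom CE CF b S + K a b)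
        + K (LR.bracket a b) c)
      + (brDel del T (brDel del S U + connHom CE CF a U - connHom CE CF c S + K a c)
        + connHom CE CF b (brDel del S U + connHom CE CF a U - connHom CE CF c S + K a c)
        - connHom CE CF (LR.bracket a c) T + K b (LR.bracket a c)) := by
  have hB2 : connHom CE CF a (K b c)
      = (K (LR.bracket a b) c + K (LR.bracket b c) a + K (LR.bracket c a) b)
        - connHom CE CF b (K c a) - connHom CE CF c (K a b) := by
    rw [← hBianchi a b c]; abel
  simp only [brDel_add_right, brDel_sub_right, brDel_add_left, brDel_sub_left,
    connHom_add_right, connHom_sub_right]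
  rw [brDel_jacobi del S T U,
    connHom_brDel CE CF del hcompat a T U,
    connHom_brDel CE CF del hcompat c S T,
    connHom_brDel CE CF del hcompat b S U,
    connHom_comm CE CF del K hRE hRF a b U,
    connHom_comm CE CF del K hRE hRF a c T,
    connHom_comm CE CF del K hRE hRF b c S,
    hB2,
    hK_skew (LR.bracket b c) a, hK_skew (LR.bracket c a) b, LR.bracket_skew c a,
    K_neg_right K hK_add_right hK_smul_right,
    hK_skew c a, connHom_neg_right,
    brDel_skew del S (K b c), brDel_skew del T (K a c),
    brDel_skew del T (connHom CE CF c S)]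
  abel
end Helpers

/-- Given a representation up to homotopy of length one
`(E, F, ∂, ∇, K)` of a Lie-Rinehart algebra `A`, one obtains an extension of
Lie-Rinehart algebras `g_∂ → Ã → A`: (i) `g_∂ = Hom_R(F,E)` with `[S,T]_∂ = S∂T - T∂S`
is a Lie algebra over `R`; (ii) `Ã = Hom_R(F,E) ⊕ A` with the stated anchor and bracket
is a Lie-Rinehart algebra over `R`; (iii) the inclusion and projection are morphisms. -/
theorem statement5
    (LR : LieRinehart R A) (del : E →ₗ[R] F)
    (CE : AConn LR E) (CF : AConn LR F)
    (hcompat : ∀ (a : A) (s : E), CF.conn a (del s) = del (CE.conn a s))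
    (K : A → A → (F →ₗ[R] E))
    (hK_skew : ∀ a b, K a b = - K b a)
    (hK_add_left : ∀ a a' b, K (a + a') b = K a b + K a' b)
    (hK_smul_left : ∀ (f : R) a b, K (f • a) b = f • K a b)
    (hK_add_right : ∀ a b b', K a (b + b') = K a b + K a b')
    (hK_smul_right : ∀ (f : R) a b, K a (f • b) = f • K a b)
    (hRE : ∀ (a b : A) (s : E), CE.curv a b s = K a b (del s))
    (hRF : ∀ (a b : A) (t : F), CF.curv a b t = del (K a b t))
    (hBianchi : ∀ a b c : A,
      connHom CE CF a (K b c) + connHom CE CF b (K c a) + connHom CE CF c (K a b)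
        = K (LR.bracket a b) c + K (LR.bracket b c) a + K (LR.bracket c a) b) :
    -- (i) `g_∂` is a Lie algebra over `R`
    ((∀ S T : F →ₗ[R] E, brDel del S T = - brDel del T S)
      ∧ (∀ S S' T : F →ₗ[R] E, brDel del (S + S') T = brDel del S T + brDel del S' T)
      ∧ (∀ (f : R) (S T : F →ₗ[R] E), brDel del (f • S) T = f • brDel del S T)
      ∧ (∀ (f : R) (S T : F →ₗ[R] E), brDel del S (f • T) = f • brDel del S T)
      ∧ (∀ S T U : F →ₗ[R] E,
          brDel del S (brDel del T U)
            = brDel del (brDel del S T) U + brDel del T (brDel del S U)))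
    -- (ii) `Ã = Hom_R(F,E) ⊕ A` is a Lie-Rinehart algebra with the stated structure
    ∧ (∃ LRt : LieRinehart R ((F →ₗ[R] E) × A),
        (∀ p q : (F →ₗ[R] E) × A,
          LRt.bracket p q
            = (brDel del p.1 q.1 + connHom CE CF p.2 q.1 - connHom CE CF q.2 p.1
                + K p.2 q.2, LR.bracket p.2 q.2))
        ∧ (∀ p : (F →ₗ[R] E) × A, LRt.anchor p = LR.anchor p.2)
        -- (iii) inclusion and projection are morphisms
        ∧ (∀ S T : F →ₗ[R] E, LRt.bracket (S, 0) (T, 0) = (brDel del S T, 0))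
        ∧ (∀ p q : (F →ₗ[R] E) × A,
            (LRt.bracket p q).2 = LR.bracket p.2 q.2)) := by
  refine ⟨⟨brDel_skew del, brDel_add_left del, brDel_smul_left del, brDel_smul_right del,
    brDel_jacobi del⟩, ?_⟩
  have K0l : ∀ x : A, K 0 x = 0 := fun x => by
    have h := hK_smul_left 0 0 x; simpa using h
  refine ⟨{
      bracket := fun p q =>
        (brDel del p.1 q.1 + connHom CE CF p.2 q.1 - connHom CE CF q.2 p.1 + K p.2 q.2,
          LR.bracket p.2 q.2)
      anchor := LR.anchor.comp (LinearMap.snd R (F →ₗ[R] E) A)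
      bracket_add_left := ?_
      bracket_add_right := ?_
      bracket_skew := ?_
      bracket_jacobi := ?_
      bracket_leibniz := ?_
      anchor_bracket := ?_ }, ?_, ?_, ?_, ?_⟩
  · intro x y z
    refine Prod.ext ?_ ?_
    · simp only [Prod.fst_add, Prod.snd_add, brDel_add_left, connHom_add_left,
        connHom_add_right, hK_add_left, Prod.mk_add_mk]
      abel
    · simp [LR.bracket_add_left, Prod.mk_add_mk]
  · intro x y z
    refine Prod.ext ?_ ?_
    · simp only [Prod.fst_add, Prod.snd_add, brDel_add_right, connHom_add_left,
        connHom_add_right, hK_add_right, Prod.mk_add_mk]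
      abel
    · simp [LR.bracket_add_right, Prod.mk_add_mk]
  · intro x y
    refine Prod.ext ?_ ?_
    · simp only [Prod.fst_neg]
      rw [brDel_skew del x.1 y.1, hK_skew x.2 y.2]
      abel
    · simp only [Prod.snd_neg]
      exact LR.bracket_skew x.2 y.2
  · intro x y z
    refine Prod.ext ?_ ?_
    · exact jacobi_fst CE CF del hcompat K hK_skew hK_add_right hK_smul_right
        hRE hRF hBianchi x.1 y.1 z.1 x.2 y.2 z.2
    · exact LR.bracket_jacobi x.2 y.2 z.2
  · intro f x y
    refine Prod.ext ?_ ?_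
    · simp only [Prod.smul_fst, Prod.smul_snd, Prod.fst_add, Prod.snd_add,
        LinearMap.comp_apply, LinearMap.snd_apply,
        brDel_smul_right, connHom_leibniz, connHom_smul_left, hK_smul_right, smul_add,
        smul_sub]
      abel
    · simp only [Prod.smul_fst, Prod.smul_snd, Prod.snd_add, LinearMap.comp_apply,
        LinearMap.snd_apply]
      exact LR.bracket_leibniz f x.2 y.2
  · intro x y f
    simp only [LinearMap.comp_apply, LinearMap.snd_apply]
    exact LR.anchor_bracket x.2 y.2 f
  · intro p q; rfl
  · intro p; rfl
  · intro S T
    refine Prod.ext ?_ ?_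
    · show brDel del S T + connHom CE CF 0 T - connHom CE CF 0 S + K 0 0 = brDel del S T
      have hc0 : ∀ W : F →ₗ[R] E, connHom CE CF (0 : A) W = 0 := fun W => by
        have h := connHom_smul_left CE CF (0 : R) 0 W
        simpa using h
      rw [hc0, hc0, K0l]
      abel
    · show LR.bracket 0 0 = 0
      have h := LR.bracket_add_left 0 0 0
      simpa using h
  · intro p q; rfl


end Extension
end

section
/- Let X be a topological space, let V^0,…,V^n and W^0,…,W^n be finite-dimensional real normed vector spaces, and for each i let ∂_i : X → L(V^i,V^{i+1}), δ_i : X → L(W^i,W^{i+1}) and f_i : X → L(V^i,W^i) be continuous maps (in operator norm) such that for every x ∈ X, ∂_{i+1}(x)∘∂_i(x) = 0, δ_{i+1}(x)∘δ_i(x) = 0, and δ_i(x)∘f_i(x) = f_{i+1}(x)∘∂_i(x). (i) If the complex (V^•,∂_•(x₀)) is exact at every degree, then there is a neighborhood U of x₀ such that (V^•,∂_•(x)) is exact at every degree for all x ∈ U. (ii) If f_•(x₀) is a quasi-isomorphism (induces isomorphisms ker/im → ker/im in every degree), then there is a neighborhood U of x₀ such that f_•(x) is a quasi-isomorphism for all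 x ∈ U. -/
open Module Filter

set_option maxHeartbeats 1000000

section helpers

lemma rank_lsc {E F : Type} [NormedAddCommGroup E] [NormedSpace ℝ E]
    [NormedAddCommGroup F] [NormedSpace ℝ F] [FiniteDimensional ℝ E]
    (L₀ : E →L[ℝ] F) :
    ∀ᶠ L : E →L[ℝ] F in nhds L₀, finrank ℝ (LinearMap.range (L₀ : E →ₗ[ℝ] F)) ≤
      finrank ℝ (LinearMap.range (L : E →ₗ[ℝ] F)) := by
  obtain ⟨S, hS⟩ := Submodule.exists_isCompl (LinearMap.ker (L₀ : E →ₗ[ℝ] F))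
  have hrankS : finrank ℝ S = finrank ℝ (LinearMap.range (L₀ : E →ₗ[ℝ] F)) := by
    have h1 := Submodule.finrank_add_eq_of_isCompl hS
    have h2 := LinearMap.finrank_range_add_finrank_ker (L₀ : E →ₗ[ℝ] F)
    omega
  set T : S →L[ℝ] F := L₀.comp S.subtypeL with hT
  have hinj : LinearMap.ker (T : S →ₗ[ℝ] F) = ⊥ := by
    rw [LinearMap.ker_eq_bot']
    intro v hv
    have hmem : (v : E) ∈ LinearMap.ker (L₀ : E →ₗ[ℝ] F) ⊓ S :=
      ⟨by simpa [hT] using hv, v.2⟩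
    rw [hS.inf_eq_bot] at hmem
    exact Subtype.ext (by simpa using hmem)
  obtain ⟨K, hK⟩ := T.antilipschitz_of_isEmbedding
    (LinearMap.isClosedEmbedding_of_injective hinj).toIsEmbedding
  have hbound : ∀ v : S, ‖v‖ ≤ ((K : ℝ) + 1) * ‖T v‖ := fun v => by
    have h := T.bound_of_antilipschitz hK v
    nlinarith [norm_nonneg (T v)]
  have hKpos : (0:ℝ) < ((K:ℝ) + 1) := by positivity
  set ε : ℝ := (2 * ((K:ℝ) + 1))⁻¹ with hε
  have hεpos : 0 < ε := by positivity
  have hhalf : ((K:ℝ) + 1) * ε = 2⁻¹ := by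
    rw [hε, mul_inv, ← mul_assoc]
    rw [mul_comm ((K:ℝ)+1) (2:ℝ)⁻¹, mul_assoc, mul_inv_cancel₀ hKpos.ne', mul_one]
  rw [Metric.eventually_nhds_iff]
  refine ⟨ε, hεpos, fun L hL => ?_⟩
  have h3 : ‖L₀ - L‖ < ε := by
    rw [dist_eq_norm] at hL
    rwa [norm_sub_rev] at hL
  have hLinj : ∀ v : S, L (v : E) = 0 → v = 0 := by
    intro v hv
    have h1 : ‖L₀ (v : E)‖ = ‖(L₀ - L) (v : E)‖ := by
      simp [ContinuousLinearMap.sub_apply, hv]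
    have h2 : ‖(L₀ - L) (v : E)‖ ≤ ‖L₀ - L‖ * ‖(v : E)‖ :=
      (L₀ - L).le_opNorm _
    have h4 : ‖v‖ ≤ ((K:ℝ) + 1) * ‖L₀ (v:E)‖ := by simpa [hT] using hbound v
    have h5 : ‖(v:E)‖ = ‖v‖ := Submodule.coe_norm v
    have h6 : ‖v‖ ≤ 2⁻¹ * ‖v‖ := by
      calc ‖v‖ ≤ ((K:ℝ) + 1) * ‖L₀ (v:E)‖ := h4
        _ = ((K:ℝ) + 1) * ‖(L₀ - L) (v:E)‖ := by rw [h1]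
        _ ≤ ((K:ℝ) + 1) * (‖L₀ - L‖ * ‖(v:E)‖) :=
            mul_le_mul_of_nonneg_left h2 hKpos.le
        _ ≤ ((K:ℝ) + 1) * (ε * ‖(v:E)‖) := by
            have : ‖L₀ - L‖ * ‖(v:E)‖ ≤ ε * ‖(v:E)‖ :=
              mul_le_mul_of_nonneg_right h3.le (norm_nonneg _)
            exact mul_le_mul_of_nonneg_left this hKpos.le
        _ = 2⁻¹ * ‖v‖ := by rw [← mul_assoc, hhalf, h5]
    have h7 : ‖v‖ = 0 := by nlinarith [norm_nonneg v]
    exact norm_eq_zero.mp h7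
  have hinj2 : Function.Injective ((L : E →ₗ[ℝ] F).comp S.subtype) := by
    rw [← LinearMap.ker_eq_bot, LinearMap.ker_eq_bot']
    intro v hv
    exact hLinj v (by simpa using hv)
  have hr1 : finrank ℝ (LinearMap.range ((L : E →ₗ[ℝ] F).comp S.subtype)) = finrank ℝ S :=
    LinearMap.finrank_range_of_inj hinj2
  have hr2 : LinearMap.range ((L : E →ₗ[ℝ] F).comp S.subtype) ≤
      LinearMap.range (L : E →ₗ[ℝ] F) := by
    rintro x ⟨s, rfl⟩
    exact ⟨s, rfl⟩
  calc finrank ℝ (LinearMap.range (L₀ : E →ₗ[ℝ] F)) = finrank ℝ S := hrankS.symm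
    _ = _ := hr1.symm
    _ ≤ _ := Submodule.finrank_mono hr2

lemma exact_open {X : Type} [TopologicalSpace X] (n : ℕ) (E : ℕ → Type)
    [∀ i, NormedAddCommGroup (E i)] [∀ i, NormedSpace ℝ (E i)]
    [∀ i, FiniteDimensional ℝ (E i)]
    (hbd : ∀ i, n < i → Subsingleton (E i))
    (d : ∀ i, X → E i →L[ℝ] E (i + 1)) (hc : ∀ i, Continuous (d i))
    (hdd : ∀ i x (v : E i), d (i + 1) x (d i x v) = 0)
    (x₀ : X)
    (h0 : ∀ v : E 0, d 0 x₀ v = 0 → v = 0)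
    (hex : ∀ (i : ℕ) (v : E (i + 1)), d (i + 1) x₀ v = 0 → ∃ u : E i, d i x₀ u = v) :
    ∀ᶠ x in nhds x₀, (∀ v : E 0, d 0 x v = 0 → v = 0) ∧
      ∀ (i : ℕ) (v : E (i + 1)), d (i + 1) x v = 0 → ∃ u : E i, d i x u = v := by
  have hr : ∀ i, ∀ᶠ x in nhds x₀,
      finrank ℝ (LinearMap.range ((d i x₀) : E i →ₗ[ℝ] E (i+1))) ≤
        finrank ℝ (LinearMap.range ((d i x) : E i →ₗ[ℝ] E (i+1))) := fun i =>
    ((hc i).tendsto x₀).eventually (rank_lsc (d i x₀))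
  have hU : ∀ᶠ x in nhds x₀, ∀ i ∈ Finset.range (n + 2),
      finrank ℝ (LinearMap.range ((d i x₀) : E i →ₗ[ℝ] E (i+1))) ≤
        finrank ℝ (LinearMap.range ((d i x) : E i →ₗ[ℝ] E (i+1))) :=
    (Filter.eventually_all_finset _).2 fun i _ => hr i
  have hker0 : LinearMap.ker ((d 0 x₀ : E 0 →ₗ[ℝ] E 1)) = ⊥ := by
    rw [LinearMap.ker_eq_bot']
    intro v hv
    exact h0 v (by simpa using hv)
  have hrk0 : finrank ℝ (LinearMap.range ((d 0 x₀) : E 0 →ₗ[ℝ] E 1)) = finrank ℝ (E 0) := by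
    have h2 := LinearMap.finrank_range_add_finrank_ker ((d 0 x₀) : E 0 →ₗ[ℝ] E 1)
    rw [hker0] at h2
    simpa using h2
  have hkerrange : ∀ i, LinearMap.range ((d i x₀) : E i →ₗ[ℝ] E (i+1)) =
      LinearMap.ker ((d (i+1) x₀) : E (i+1) →ₗ[ℝ] E (i+2)) := by
    intro i
    apply le_antisymm
    · rintro v ⟨u, rfl⟩
      simpa using hdd i x₀ u
    · intro v hv
      obtain ⟨u, hu⟩ := hex i v (by simpa using hv)
      exact ⟨u, by simpa using hu⟩
  filter_upwards [hU] with x hx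
  constructor
  · intro v hv
    have h1 := LinearMap.finrank_range_add_finrank_ker ((d 0 x) : E 0 →ₗ[ℝ] E 1)
    have h2 := hx 0 (by simp)
    have hk : finrank ℝ (LinearMap.ker ((d 0 x) : E 0 →ₗ[ℝ] E 1)) = 0 := by omega
    have hbot : LinearMap.ker ((d 0 x) : E 0 →ₗ[ℝ] E 1) = ⊥ :=
      Submodule.finrank_eq_zero.mp hk
    have : v ∈ LinearMap.ker ((d 0 x) : E 0 →ₗ[ℝ] E 1) := by simpa using hv
    rw [hbot] at this
    simpa using this
  · intro i v hv
    by_cases hi : n < i + 1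
    · haveI := hbd (i + 1) hi
      exact ⟨0, Subsingleton.elim _ _⟩
    · push_neg at hi
      have h2 := hx i (by simp only [Finset.mem_range]; omega)
      have h3 := hx (i+1) (by simp only [Finset.mem_range]; omega)
      have hle : LinearMap.range ((d i x) : E i →ₗ[ℝ] E (i+1)) ≤
          LinearMap.ker ((d (i+1) x) : E (i+1) →ₗ[ℝ] E (i+2)) := by
        rintro w ⟨u, rfl⟩
        simpa using hdd i x u
      have e1 := LinearMap.finrank_range_add_finrank_ker ((d (i+1) x) : E (i+1) →ₗ[ℝ] E (i+2))
      have e2 := LinearMap.finrank_range_add_finrank_ker ((d (i+1) x₀) : E (i+1) →ₗ[ℝ] E (i+2))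
      have e3 : finrank ℝ (LinearMap.ker ((d (i+1) x₀) : E (i+1) →ₗ[ℝ] E (i+2))) =
          finrank ℝ (LinearMap.range ((d i x₀) : E i →ₗ[ℝ] E (i+1))) := by
        rw [← hkerrange i]
      have hkle : finrank ℝ (LinearMap.ker ((d (i+1) x) : E (i+1) →ₗ[ℝ] E (i+2))) ≤
          finrank ℝ (LinearMap.range ((d i x) : E i →ₗ[ℝ] E (i+1))) := by omega
      have heq : LinearMap.range ((d i x) : E i →ₗ[ℝ] E (i+1)) =
          LinearMap.ker ((d (i+1) x) : E (i+1) →ₗ[ℝ] E (i+2)) :=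
        Submodule.eq_of_le_of_finrank_le hle hkle
      have hvin : v ∈ LinearMap.ker ((d (i+1) x) : E (i+1) →ₗ[ℝ] E (i+2)) := by simpa using hv
      rw [← heq] at hvin
      obtain ⟨u, hu⟩ := hvin
      exact ⟨u, by simpa using hu⟩

end helpers

def Cone15 (V W : ℕ → Type) : ℕ → Type
  | 0 => V 0
  | (i + 1) => V (i + 1) × W i

section coneinst

variable (V W : ℕ → Type)
variable [∀ i, NormedAddCommGroup (V i)] [∀ i, NormedSpace ℝ (V i)]
variable [∀ i, NormedAddCommGroup (W i)] [∀ i, NormedSpace ℝ (W i)]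

instance : ∀ i, NormedAddCommGroup (Cone15 V W i)
  | 0 => inferInstanceAs (NormedAddCommGroup (V 0))
  | (i + 1) => inferInstanceAs (NormedAddCommGroup (V (i + 1) × W i))

instance : ∀ i, NormedSpace ℝ (Cone15 V W i)
  | 0 => inferInstanceAs (NormedSpace ℝ (V 0))
  | (i + 1) => inferInstanceAs (NormedSpace ℝ (V (i + 1) × W i))

instance [∀ i, FiniteDimensional ℝ (V i)] [∀ i, FiniteDimensional ℝ (W i)] :
    ∀ i, FiniteDimensional ℝ (Cone15 V W i)
  | 0 => inferInstanceAs (FiniteDimensional ℝ (V 0))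
  | (i + 1) => inferInstanceAs (FiniteDimensional ℝ (V (i + 1) × W i))

lemma cone15_subsingleton (n : ℕ)
    (hVbd : ∀ i, n < i → Subsingleton (V i)) (hWbd : ∀ i, n < i → Subsingleton (W i)) :
    ∀ i, n + 1 < i → Subsingleton (Cone15 V W i)
  | 0, h => absurd h (by omega)
  | (i + 1), h => by
      haveI := hVbd (i + 1) (by omega)
      haveI := hWbd i (by omega)
      exact inferInstanceAs (Subsingleton (V (i + 1) × W i))

variable {X : Type} [TopologicalSpace X]

def coneD (dV : ∀ i, X → V i →L[ℝ] V (i + 1)) (dW : ∀ i, X → W i →L[ℝ] W (i + 1))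
    (f : ∀ i, X → V i →L[ℝ] W i) : ∀ i, X → Cone15 V W i →L[ℝ] Cone15 V W (i + 1)
  | 0 => fun x => (dV 0 x).prod (f 0 x)
  | (i + 1) => fun x =>
      ((dV (i + 1) x).comp (ContinuousLinearMap.fst ℝ (V (i + 1)) (W i))).prod
        (((f (i + 1) x).comp (ContinuousLinearMap.fst ℝ (V (i + 1)) (W i))) -
          ((dW i x).comp (ContinuousLinearMap.snd ℝ (V (i + 1)) (W i))))

variable {V W}
variable (dV : ∀ i, X → V i →L[ℝ] V (i + 1)) (dW : ∀ i, X → W i →L[ℝ] W (i + 1))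
    (f : ∀ i, X → V i →L[ℝ] W i)

lemma coneD_zero_apply (x : X) (v : V 0) :
    coneD V W dV dW f 0 x v = (dV 0 x v, f 0 x v) := rfl

lemma coneD_succ_apply (i : ℕ) (x : X) (c : V (i + 1) × W i) :
    coneD V W dV dW f (i + 1) x c = (dV (i + 1) x c.1, f (i + 1) x c.1 - dW i x c.2) := rfl

lemma coneD_cont (hdVc : ∀ i, Continuous (dV i)) (hdWc : ∀ i, Continuous (dW i))
    (hfc : ∀ i, Continuous (f i)) : ∀ i, Continuous (coneD V W dV dW f i) := by
  intro i
  match i with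
  | 0 =>
    show Continuous fun x => (dV 0 x).prod (f 0 x)
    exact ((ContinuousLinearMap.prodₗᵢ ℝ : (V 0 →L[ℝ] V 1) × (V 0 →L[ℝ] W 0) ≃ₗᵢ[ℝ]
      (V 0 →L[ℝ] V 1 × W 0)).continuous.comp ((hdVc 0).prodMk (hfc 0)) : _)
  | (i + 1) =>
    show Continuous fun x =>
      ((dV (i + 1) x).comp (ContinuousLinearMap.fst ℝ (V (i + 1)) (W i))).prod
        (((f (i + 1) x).comp (ContinuousLinearMap.fst ℝ (V (i + 1)) (W i))) -
          ((dW i x).comp (ContinuousLinearMap.snd ℝ (V (i + 1)) (W i))))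
    have h1 : Continuous fun x => (dV (i+1) x).comp
        (ContinuousLinearMap.fst ℝ (V (i + 1)) (W i)) :=
      (hdVc (i+1)).clm_comp continuous_const
    have h2 : Continuous fun x => ((f (i + 1) x).comp
        (ContinuousLinearMap.fst ℝ (V (i + 1)) (W i))) -
          ((dW i x).comp (ContinuousLinearMap.snd ℝ (V (i + 1)) (W i))) :=
      ((hfc (i+1)).clm_comp continuous_const).sub ((hdWc i).clm_comp continuous_const)
    exact ((ContinuousLinearMap.prodₗᵢ ℝ).continuous.comp (h1.prodMk h2) : _)

lemma coneD_dd (hVdd : ∀ i x (v : V i), dV (i + 1) x (dV i x v) = 0)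
    (hWdd : ∀ i x (w : W i), dW (i + 1) x (dW i x w) = 0)
    (hchain : ∀ i x (v : V i), dW i x (f i x v) = f (i + 1) x (dV i x v)) :
    ∀ i x (c : Cone15 V W i), coneD V W dV dW f (i + 1) x (coneD V W dV dW f i x c) = 0 := by
  intro i x c
  match i, c with
  | 0, c =>
    show ((dV 1 x (dV 0 x c), f 1 x (dV 0 x c) - dW 0 x (f 0 x c)) : V 2 × W 1) =
      ((0 : V 2), (0 : W 1))
    rw [hVdd 0 x c, hchain 0 x c, sub_self]
  | (i + 1), c =>
    show ((dV (i + 2) x (dV (i + 1) x c.1),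
        f (i + 2) x (dV (i + 1) x c.1) - dW (i + 1) x (f (i + 1) x c.1 - dW i x c.2)) :
        V (i + 3) × W (i + 2)) = ((0 : V (i + 3)), (0 : W (i + 2)))
    rw [hVdd (i + 1) x c.1, map_sub, hchain (i + 1) x c.1, hWdd i x c.2, sub_zero, sub_self]

end coneinst

section

variable (X : Type) [TopologicalSpace X] (n : ℕ)
variable (V W : ℕ → Type)
variable [∀ i, NormedAddCommGroup (V i)] [∀ i, NormedSpace ℝ (V i)]
variable [∀ i, NormedAddCommGroup (W i)] [∀ i, NormedSpace ℝ (W i)]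

/-- The pointwise complex `(V, ∂(x))` is exact at every degree (including injectivity
in degree `0`). -/
def IsExactEverywhere (dV : ∀ i, X → V i →L[ℝ] V (i + 1)) (x : X) : Prop :=
  (∀ v : V 0, dV 0 x v = 0 → v = 0) ∧
    ∀ (i : ℕ) (v : V (i + 1)), dV (i + 1) x v = 0 → ∃ u : V i, dV i x u = v

/-- The pointwise chain map `f(x) : (V, ∂(x)) → (W, δ(x))` is a quasi-isomorphism: the
induced maps `ker/im → ker/im` are bijective in every degree. -/
def IsQuasiIsoAt (dV : ∀ i, X → V i →L[ℝ] V (i + 1)) (dW : ∀ i, X → W i →L[ℝ] W (i + 1))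
    (f : ∀ i, X → V i →L[ℝ] W i) (x : X) : Prop :=
  (∀ v : V 0, dV 0 x v = 0 → f 0 x v = 0 → v = 0) ∧
  (∀ w : W 0, dW 0 x w = 0 → ∃ v : V 0, dV 0 x v = 0 ∧ f 0 x v = w) ∧
  (∀ (i : ℕ) (v : V (i + 1)), dV (i + 1) x v = 0 →
      (∃ w : W i, dW i x w = f (i + 1) x v) → ∃ u : V i, dV i x u = v) ∧
  (∀ (i : ℕ) (w : W (i + 1)), dW (i + 1) x w = 0 →
      ∃ v : V (i + 1), dV (i + 1) x v = 0 ∧ ∃ w' : W i, dW i x w' = w - f (i + 1) x v)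

variable {X V W}

lemma cone_exact_iff (dV : ∀ i, X → V i →L[ℝ] V (i + 1)) (dW : ∀ i, X → W i →L[ℝ] W (i + 1))
    (f : ∀ i, X → V i →L[ℝ] W i)
    (hchain : ∀ i x (v : V i), dW i x (f i x v) = f (i + 1) x (dV i x v))
    (x : X) :
    ((∀ v : V 0, coneD V W dV dW f 0 x v = 0 → v = 0) ∧
      ∀ (i : ℕ) (c : Cone15 V W (i + 1)), coneD V W dV dW f (i + 1) x c = 0 →
        ∃ u : Cone15 V W i, coneD V W dV dW f i x u = c) ↔
      IsQuasiIsoAt X V W dV dW f x := by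
  constructor
  · rintro ⟨hinj, hexact⟩
    refine ⟨?_, ?_, ?_, ?_⟩
    · intro v h1 h2
      apply hinj
      show ((dV 0 x v, f 0 x v) : V 1 × W 0) = ((0 : V 1), (0 : W 0))
      rw [h1, h2]
    · intro w hw
      have hc : coneD V W dV dW f 1 x (((0 : V 1), w) : Cone15 V W 1) = 0 := by
        show ((dV 1 x 0, f 1 x 0 - dW 0 x w) : V 2 × W 1) = ((0 : V 2), (0 : W 1))
        rw [map_zero, map_zero, hw, sub_zero]
      obtain ⟨u, hu⟩ := hexact 0 _ hc
      exact ⟨u, congrArg Prod.fst hu, congrArg Prod.snd hu⟩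
    · intro i v hdv hw
      obtain ⟨w, hw⟩ := hw
      have hc : coneD V W dV dW f (i + 1) x ((v, w) : Cone15 V W (i + 1)) = 0 := by
        show ((dV (i + 1) x v, f (i + 1) x v - dW i x w) : V (i + 2) × W (i + 1)) =
          ((0 : V (i + 2)), (0 : W (i + 1)))
        rw [hdv, hw, sub_self]
      obtain ⟨u, hu⟩ := hexact i _ hc
      cases i with
      | zero => exact ⟨u, congrArg Prod.fst hu⟩
      | succ j => exact ⟨u.1, congrArg Prod.fst hu⟩
    · intro i w hw
      have hc : coneD V W dV dW f (i + 2) x (((0 : V (i + 2)), w) : Cone15 V W (i + 2)) = 0 := by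
        show ((dV (i + 2) x 0, f (i + 2) x 0 - dW (i + 1) x w) : V (i + 3) × W (i + 2)) =
          ((0 : V (i + 3)), (0 : W (i + 2)))
        rw [map_zero, map_zero, hw, sub_zero]
      obtain ⟨u, hu⟩ := hexact (i + 1) _ hc
      have h1 : dV (i + 1) x u.1 = 0 := congrArg Prod.fst hu
      have h2 : f (i + 1) x u.1 - dW i x u.2 = w := congrArg Prod.snd hu
      refine ⟨u.1, h1, -u.2, ?_⟩
      rw [map_neg, ← h2]
      abel
  · rintro ⟨q1, q2, q3, q4⟩
    constructor
    · intro v h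
      exact q1 v (congrArg Prod.fst h) (congrArg Prod.snd h)
    · intro i c hc
      have h1 : dV (i + 1) x c.1 = 0 := congrArg Prod.fst hc
      have h2 : f (i + 1) x c.1 - dW i x c.2 = 0 := congrArg Prod.snd hc
      have h2' : dW i x c.2 = f (i + 1) x c.1 := (sub_eq_zero.mp h2).symm
      obtain ⟨u, hu⟩ := q3 i c.1 h1 ⟨c.2, h2'⟩
      cases i with
      | zero =>
        have h3 : dW 0 x (c.2 - f 0 x u) = 0 := by
          rw [map_sub, h2', hchain 0 x u, hu, sub_self]
        obtain ⟨v', hv'1, hv'2⟩ := q2 (c.2 - f 0 x u) h3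
        refine ⟨u + v', ?_⟩
        show ((dV 0 x (u + v'), f 0 x (u + v')) : V 1 × W 0) = c
        have e1 : dV 0 x (u + v') = c.1 := by rw [map_add, hu, hv'1, add_zero]
        have e2 : f 0 x (u + v') = c.2 := by rw [map_add, hv'2]; abel
        rw [e1, e2]
        exact Prod.mk.eta
      | succ j =>
        have h3 : dW (j + 1) x (c.2 - f (j + 1) x u) = 0 := by
          rw [map_sub, h2', hchain (j + 1) x u, hu, sub_self]
        obtain ⟨v', hv'1, w', hw'⟩ := q4 j (c.2 - f (j + 1) x u) h3
        refine ⟨((u + v', -w') : Cone15 V W (j + 1)), ?_⟩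
        show ((dV (j + 1) x (u + v'), f (j + 1) x (u + v') - dW j x (-w')) :
          V (j + 2) × W (j + 1)) = c
        have e1 : dV (j + 1) x (u + v') = c.1 := by rw [map_add, hu, hv'1, add_zero]
        have e2 : f (j + 1) x (u + v') - dW j x (-w') = c.2 := by
          rw [map_add, map_neg, sub_neg_eq_add, hw']
          abel
        rw [e1, e2]
        exact Prod.mk.eta

variable (X V W)

/-- For continuous families (over a topological space `X`) of bounded
cochain complexes of finite-dimensional real normed spaces and of chain maps between
them: (i) exactness at every degree is an open condition on the parameter;
(ii) being a quasi-isomorphism is an open condition on the parameter. -/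
theorem statement15
    [∀ i, FiniteDimensional ℝ (V i)] [∀ i, FiniteDimensional ℝ (W i)]
    (hVbd : ∀ i, n < i → Subsingleton (V i)) (hWbd : ∀ i, n < i → Subsingleton (W i))
    (dV : ∀ i, X → V i →L[ℝ] V (i + 1)) (dW : ∀ i, X → W i →L[ℝ] W (i + 1))
    (f : ∀ i, X → V i →L[ℝ] W i)
    (hdVc : ∀ i, Continuous (dV i)) (hdWc : ∀ i, Continuous (dW i))
    (hfc : ∀ i, Continuous (f i))
    (hVdd : ∀ i x (v : V i), dV (i + 1) x (dV i x v) = 0)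
    (hWdd : ∀ i x (w : W i), dW (i + 1) x (dW i x w) = 0)
    (hchain : ∀ i x (v : V i), dW i x (f i x v) = f (i + 1) x (dV i x v))
    (x₀ : X) :
    (IsExactEverywhere X V dV x₀ →
      ∃ U ∈ nhds x₀, ∀ x ∈ U, IsExactEverywhere X V dV x) ∧
    (IsQuasiIsoAt X V W dV dW f x₀ →
      ∃ U ∈ nhds x₀, ∀ x ∈ U, IsQuasiIsoAt X V W dV dW f x) := by
  constructor
  · rintro ⟨h0, hex⟩
    have h := exact_open n V hVbd dV hdVc hVdd x₀ h0 hex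
    exact eventually_iff_exists_mem.mp h
  · intro hq
    obtain ⟨h0, hex⟩ := (cone_exact_iff dV dW f hchain x₀).mpr hq
    have h := exact_open (n + 1) (Cone15 V W) (cone15_subsingleton V W n hVbd hWbd)
      (coneD V W dV dW f) (coneD_cont dV dW f hdVc hdWc hfc)
      (coneD_dd dV dW f hVdd hWdd hchain) x₀ h0 hex
    have h2 := h.mono fun x hx => (cone_exact_iff dV dW f hchain x).mp hx
    exact eventually_iff_exists_mem.mp h2

end
end

section
/- Let A be a Lie-Rinehart algebra over R which is free as an R-module with basis e₁,…,e_r, and suppose ∇ : L × A → A is a connection on A for which the basis is flat (∇_X e_i = 0 for all X ∈ L and all i) and whose basic curvature vanishes (R^bas_∇ = 0). Write [e_i,e_j] = Σ_k c^k_{ij}·e_k with c^k_{ij} ∈ R. Then: (i) every derivation annihilates the structure functions, X(c^k_{ij}) = 0 for all X ∈ L and all i,j,k; (ii) if moreover the only elements of R annihilated by all ℝ-linear derivations are the scalar multiples of 1 (as holds for R = C^∞(M) with M connected), then the c^k_{ij} are real constants which are the structure constants of an r-dimensional real Lie algebra g, and the assignment sending the i-th basis vector of g to ρ(e_i) ∈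 L is a morphism of Lie algebras, i.e. an action of g by derivations exhibiting A as the action (transformation) Lie-Rinehart algebra R ⊗ g. -/
/-- Let `A` be a Lie-Rinehart algebra over `R`, free with basis
`e₁, …, e_r`, with a connection `∇` for which the basis is flat and whose basic curvature
vanishes.  Write `[eᵢ, eⱼ] = Σₖ cᵏᵢⱼ • eₖ`.  Then: (i) every derivation annihilates the
structure functions `cᵏᵢⱼ`; (ii) if the only elements of `R` killed by all derivations are
the scalars, then the `cᵏᵢⱼ` are real constants, antisymmetric and satisfying the Jacobi
identity (the structure constants of a real Lie algebra `g`), and `eᵢ ↦ ρ(eᵢ)` defines a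
morphism of Lie algebras, i.e. an action of `g` on `R` by derivations. -/
theorem statement17
    {R : Type} [CommRing R] [Algebra ℝ R]
    {A : Type} [AddCommGroup A] [Module R A]
    (LR : LieRinehart R A) (r : ℕ) (b : Module.Basis (Fin r) R A) (N : LConn R A)
    (hflat : ∀ (X : Derivation ℝ R R) (i : Fin r), N.conn X (b i) = 0)
    (hbas : ∀ (a a' : A) (X : Derivation ℝ R R), basCurv LR N a a' X = 0) :
    -- (i) derivations kill the structure functions
    (∀ (X : Derivation ℝ R R) (i j k : Fin r),
      X (b.repr (LR.bracket (b i) (b j)) k) = 0)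
    -- (ii) under the connectedness assumption, the structure functions are the structure
    -- constants of a real Lie algebra acting on `R` by derivations via the anchor
    ∧ ((∀ f : R, (∀ X : Derivation ℝ R R, X f = 0) → ∃ c : ℝ, f = algebraMap ℝ R c) →
        ∃ cc : Fin r → Fin r → Fin r → ℝ,
          (∀ i j k : Fin r,
            b.repr (LR.bracket (b i) (b j)) k = algebraMap ℝ R (cc k i j))
          ∧ (∀ i j k : Fin r, cc k i j = - cc k j i)
          ∧ (∀ i j l m : Fin r,
              ∑ k : Fin r, (cc m k l * cc k i j + cc m k i * cc k j l
                + cc m k j * cc k l i) = 0)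
          ∧ (∀ (i j : Fin r) (f : R),
              ∑ k : Fin r, algebraMap ℝ R (cc k i j) • LR.anchor (b k) f
                = LR.anchor (b i) (LR.anchor (b j) f)
                  - LR.anchor (b j) (LR.anchor (b i) f))) := by
    classical
  have hbr0r : ∀ x : A, LR.bracket x 0 = 0 := by
    intro x
    have h := LR.bracket_add_right x 0 0
    rw [add_zero] at h
    exact (left_eq_add.mp h)
  have hbr0l : ∀ y : A, LR.bracket 0 y = 0 := by
    intro y; rw [LR.bracket_skew, hbr0r, neg_zero]
  have hbrneg : ∀ x y : A, LR.bracket x (-y) = - LR.bracket x y := by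
    intro x y
    have h := LR.bracket_add_right x y (-y)
    rw [add_neg_cancel, hbr0r] at h
    exact (eq_neg_of_add_eq_zero_right h.symm)
  have hbrsum : ∀ (x : A) (s : Finset (Fin r)) (f : Fin r → A),
      LR.bracket x (∑ k ∈ s, f k) = ∑ k ∈ s, LR.bracket x (f k) := by
    intro x s f
    exact map_sum (AddMonoidHom.mk' (LR.bracket x) (LR.bracket_add_right x)) f s
  have hconnsum : ∀ (X : Derivation ℝ R R) (s : Finset (Fin r)) (f : Fin r → A),
      N.conn X (∑ k ∈ s, f k) = ∑ k ∈ s, N.conn X (f k) := by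
    intro X s f
    exact map_sum (AddMonoidHom.mk' (N.conn X) (N.conn_add_right X)) f s
  have hi : ∀ (X : Derivation ℝ R R) (i j k : Fin r),
      X (b.repr (LR.bracket (b i) (b j)) k) = 0 := by
    intro X i j k
    have h := hbas (b i) (b j) X
    unfold basCurv at h
    simp only [hflat, hbr0l, hbr0r, sub_zero, add_zero] at h
    have h1 : N.conn X (LR.bracket (b i) (b j))
        = ∑ k', (X (b.repr (LR.bracket (b i) (b j)) k')) • b k' := by
      conv_lhs => rw [← Module.Basis.sum_repr b (LR.bracket (b i) (b j))]
      rw [hconnsum]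
      refine Finset.sum_congr rfl fun k' _ => ?_
      rw [N.conn_leibniz, hflat, smul_zero, zero_add]
    rw [h1] at h
    exact Fintype.linearIndependent_iff.mp b.linearIndependent _ h k
  have hcomp : ∀ i j l m : Fin r,
      b.repr (LR.bracket (LR.bracket (b i) (b j)) (b l)) m
        = ∑ k, b.repr (LR.bracket (b i) (b j)) k * b.repr (LR.bracket (b k) (b l)) m := by
    intro i j l m
    have hx : LR.bracket (LR.bracket (b i) (b j)) (b l)
        = ∑ k, b.repr (LR.bracket (b i) (b j)) k • LR.bracket (b k) (b l) := by
      conv_lhs => rw [← Module.Basis.sum_repr b (LR.bracket (b i) (b j))]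
      rw [LR.bracket_skew, hbrsum, ← Finset.sum_neg_distrib]
      refine Finset.sum_congr rfl fun k _ => ?_
      rw [LR.bracket_leibniz, hi _ i j k, zero_smul, add_zero,
          LR.bracket_skew (b k) (b l), smul_neg]
    rw [hx, map_sum, Finsupp.finset_sum_apply]
    refine Finset.sum_congr rfl fun k _ => ?_
    rw [map_smul, Finsupp.smul_apply, smul_eq_mul]
  have hjacA : ∀ i j l : Fin r,
      LR.bracket (LR.bracket (b i) (b j)) (b l)
      + LR.bracket (LR.bracket (b j) (b l)) (b i)
      + LR.bracket (LR.bracket (b l) (b i)) (b j) = 0 := by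
    intro i j l
    have h1 := LR.bracket_jacobi (b i) (b j) (b l)
    rw [LR.bracket_skew (LR.bracket (b j) (b l)) (b i),
        LR.bracket_skew (LR.bracket (b l) (b i)) (b j),
        LR.bracket_skew (b l) (b i), hbrneg, h1]
    abel
  refine ⟨hi, ?_⟩
  intro hconn
  rcases subsingleton_or_nontrivial R with hR | hR
  · exact ⟨fun _ _ _ => 0, fun i j k => Subsingleton.elim _ _, fun i j k => by simp,
      fun i j l m => by simp, fun i j f => Subsingleton.elim _ _⟩
  · have hinj : Function.Injective (algebraMap ℝ R) := (algebraMap ℝ R).injective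
    choose cc hcc using fun (k i j : Fin r) =>
      hconn (b.repr (LR.bracket (b i) (b j)) k) (fun X => hi X i j k)
    refine ⟨cc, fun i j k => hcc k i j, ?_, ?_, ?_⟩
    · intro i j k
      apply hinj
      rw [map_neg, ← hcc, ← hcc, LR.bracket_skew (b i) (b j)]
      simp
    · intro i j l m
      apply hinj
      simp only [map_sum, map_add, map_mul, map_zero, ← hcc]
      have h' := congrArg (fun z => (b.repr z) m) (hjacA i j l)
      simp only [map_add, map_zero, Finsupp.add_apply, Finsupp.coe_add, Pi.add_apply,
        Finsupp.coe_zero, Pi.zero_apply] at h'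
      rw [hcomp i j l m, hcomp j l i m, hcomp l i j m,
        ← Finset.sum_add_distrib, ← Finset.sum_add_distrib] at h'
      rw [← h']
      exact Finset.sum_congr rfl fun k _ => by ring
    · intro i j f
      rw [← LR.anchor_bracket (b i) (b j) f]
      conv_rhs => rw [← Module.Basis.sum_repr b (LR.bracket (b i) (b j))]
      rw [map_sum]
      have hsum : ∀ (g : Fin r → Derivation ℝ R R),
          (∑ k, g k) f = ∑ k, g k f := by
        intro g
        exact map_sum (AddMonoidHom.mk' (fun D : Derivation ℝ R R => D f)
          (fun D D' => rfl)) g Finset.univ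
      rw [hsum]
      refine Finset.sum_congr rfl fun k _ => ?_
      rw [← hcc]
      simp
end
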